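/- Let a ≥ d ≥ 1 and let φ1 be an (a−1)×(d−1) matrix and φ2 an a×d matrix over a field such that [I;0]·φ1 = φ2·[I;0] and [0;I]·φ1 = φ2·[0;I] (where [I;0]: K^{k−1} → K^k is the inclusion into the first k−1 coordinates and [0;I] the inclusion into the last k−1 coordinates, with k = d on the right and k = a on the left). Then there exist scalars x_1, ..., x_{a−d+1} such that (φ2)_{u,v} = x_{u−v+1} when 0 ≤ u−v ≤ a−d and (φ2)_{u,v} = 0 otherwise, and similarly for φ1; i.e., every homomorphism Q_d → Q_a of Kronecker representations is given by a banded lower-triangular Toeplitz pair. Moreover, if a < d, then φ1 = 0 and φ2 = 0. -/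

import Mathlib

open Matrix

/-- The inclusion `[I;0] : K^{k-1} → K^k` (the map `α` of `Q_k`). -/
def incA (K : Type*) [Field K] (k : ℕ) : Matrix (Fin k) (Fin (k - 1)) K :=
  fun u v => if (u : ℕ) = (v : ℕ) then 1 else 0

/-- The inclusion `[0;I] : K^{k-1} → K^k` (the map `β` of `Q_k`). -/
def incB (K : Type*) [Field K] (k : ℕ) : Matrix (Fin k) (Fin (k - 1)) K :=
  fun u v => if (u : ℕ) = (v : ℕ) + 1 then 1 else 0

section Aux

variable {K : Type*} [Field K]

lemma sum_delta_right {n : ℕ} (f : Fin n → K) (j : ℕ) :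
    (∑ w : Fin n, f w * (if (w : ℕ) = j then (1:K) else 0)) =
      if h : j < n then f ⟨j, h⟩ else 0 := by
  split
  · next h =>
    rw [Fintype.sum_eq_single (⟨j, h⟩ : Fin n)]
    · simp
    · intro w hw
      have : (w : ℕ) ≠ j := fun hc => hw (Fin.ext hc)
      simp [this]
  · next h =>
    apply Finset.sum_eq_zero
    intro w _
    have : (w : ℕ) ≠ j := by omega
    simp [this]

lemma sum_delta_left {n : ℕ} (f : Fin n → K) (j : ℕ) :
    (∑ w : Fin n, (if j = (w : ℕ) then (1:K) else 0) * f w) =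
      if h : j < n then f ⟨j, h⟩ else 0 := by
  rw [← sum_delta_right f j]
  apply Finset.sum_congr rfl
  intro w _
  by_cases h : j = (w : ℕ)
  · simp [h]
  · have h2 : (w : ℕ) ≠ j := fun hc => h hc.symm
    simp [h, h2]

lemma sum_delta_left' {n : ℕ} (f : Fin n → K) (j : ℕ) :
    (∑ w : Fin n, (if j = (w : ℕ) + 1 then (1:K) else 0) * f w) =
      if h : 1 ≤ j ∧ j - 1 < n then f ⟨j - 1, h.2⟩ else 0 := by
  split
  · next h =>
    rw [Fintype.sum_eq_single (⟨j - 1, h.2⟩ : Fin n)]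
    · simp; omega
    · intro w hw
      have hv : (w : ℕ) ≠ j - 1 := fun hc => hw (Fin.ext hc)
      have : j ≠ (w : ℕ) + 1 := by omega
      simp [this]
  · next h =>
    apply Finset.sum_eq_zero
    intro w _
    have : j ≠ (w : ℕ) + 1 := by
      have := w.isLt; omega
    simp [this]

lemma rel_H1 {a d : ℕ} (hd : 1 ≤ d)
    (φ₁ : Matrix (Fin (a - 1)) (Fin (d - 1)) K) (φ₂ : Matrix (Fin a) (Fin d) K)
    (h₁ : incA K a * φ₁ = φ₂ * incA K d)
    (u : Fin a) (j : ℕ) (hj : j < d - 1) :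
    φ₂ u ⟨j, by omega⟩ =
      if h : (u : ℕ) < a - 1 then φ₁ ⟨u, h⟩ ⟨j, hj⟩ else 0 := by
  have L : (incA K a * φ₁) u ⟨j, hj⟩ =
      if h : (u : ℕ) < a - 1 then φ₁ ⟨u, h⟩ ⟨j, hj⟩ else 0 := by
    rw [Matrix.mul_apply]
    simp only [incA]
    exact sum_delta_left (fun w => φ₁ w ⟨j, hj⟩) (u : ℕ)
  have R : (φ₂ * incA K d) u ⟨j, hj⟩ = φ₂ u ⟨j, by omega⟩ := by
    rw [Matrix.mul_apply]
    simp only [incA]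
    have h2 := sum_delta_right (φ₂ u) j
    rw [dif_pos (show j < d by omega)] at h2
    exact h2
  exact R.symm.trans ((congrFun (congrFun h₁ u) ⟨j, hj⟩).symm.trans L)

lemma rel_H2 {a d : ℕ} (ha : 1 ≤ a) (hd : 1 ≤ d)
    (φ₁ : Matrix (Fin (a - 1)) (Fin (d - 1)) K) (φ₂ : Matrix (Fin a) (Fin d) K)
    (h₂ : incB K a * φ₁ = φ₂ * incB K d)
    (u : Fin a) (j : ℕ) (hj : j < d - 1) :
    φ₂ u ⟨j + 1, by omega⟩ =
      if h : 1 ≤ (u : ℕ) then φ₁ ⟨(u : ℕ) - 1, by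
        have := u.isLt; omega⟩ ⟨j, hj⟩ else 0 := by
  have L : (incB K a * φ₁) u ⟨j, hj⟩ =
      if h : 1 ≤ (u : ℕ) ∧ (u : ℕ) - 1 < a - 1 then
        φ₁ ⟨(u : ℕ) - 1, h.2⟩ ⟨j, hj⟩ else 0 := by
    rw [Matrix.mul_apply]
    simp only [incB]
    exact sum_delta_left' (fun w => φ₁ w ⟨j, hj⟩) (u : ℕ)
  have R : (φ₂ * incB K d) u ⟨j, hj⟩ = φ₂ u ⟨j + 1, by omega⟩ := by
    rw [Matrix.mul_apply]
    simp only [incB]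
    have h2 := sum_delta_right (φ₂ u) (j + 1)
    rw [dif_pos (show j + 1 < d by omega)] at h2
    exact h2
  have e := R.symm.trans ((congrFun (congrFun h₂ u) ⟨j, hj⟩).symm.trans L)
  rw [e]
  by_cases h : 1 ≤ (u : ℕ)
  · rw [dif_pos ⟨h, by have := u.isLt; omega⟩, dif_pos h]
  · rw [dif_neg (by omega), dif_neg h]

end Aux

/-- every homomorphism `(φ₁, φ₂) : Q_d → Q_a` of Kronecker
representations is a banded lower-triangular Toeplitz pair when `a ≥ d`, and is
zero when `a < d`. -/
theorem hom_Q_structure (K : Type*) [Field K] (a d : ℕ) (ha : 1 ≤ a) (hd : 1 ≤ d)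
    (φ₁ : Matrix (Fin (a - 1)) (Fin (d - 1)) K) (φ₂ : Matrix (Fin a) (Fin d) K)
    (h₁ : incA K a * φ₁ = φ₂ * incA K d) (h₂ : incB K a * φ₁ = φ₂ * incB K d) :
    (d ≤ a → ∃ x : ℕ → K,
      (∀ u v, φ₂ u v = if (v : ℕ) ≤ (u : ℕ) ∧ (u : ℕ) - (v : ℕ) ≤ a - d then
        x ((u : ℕ) - (v : ℕ)) else 0) ∧
      (∀ u v, φ₁ u v = if (v : ℕ) ≤ (u : ℕ) ∧ (u : ℕ) - (v : ℕ) ≤ a - d then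
        x ((u : ℕ) - (v : ℕ)) else 0)) ∧
    (a < d → φ₁ = 0 ∧ φ₂ = 0) := by
  -- congruence helper for entries of φ₂
  have ecg : ∀ {i i' j j' : ℕ} {hi : i < a} {hi' : i' < a} {hj : j < d}
      {hj' : j' < d}, i = i' → j = j' →
      φ₂ ⟨i, hi⟩ ⟨j, hj⟩ = φ₂ ⟨i', hi'⟩ ⟨j', hj'⟩ := by
    intro i i' j j' hi hi' hj hj' e1 e2
    subst e1; subst e2; rfl
  -- one-step diagonal constancy
  have C1 : ∀ (i j : ℕ) (hi : i + 1 < a) (hj : j + 1 < d),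
      φ₂ ⟨i + 1, hi⟩ ⟨j + 1, hj⟩ = φ₂ ⟨i, by omega⟩ ⟨j, by omega⟩ := by
    intro i j hi hj
    have hjd : j < d - 1 := by omega
    have e1 := rel_H2 ha hd φ₁ φ₂ h₂ ⟨i + 1, hi⟩ j hjd
    rw [dif_pos (show 1 ≤ ((⟨i + 1, hi⟩ : Fin a) : ℕ) by simp)] at e1
    have e2 := rel_H1 hd φ₁ φ₂ h₁ ⟨i, by omega⟩ j hjd
    rw [dif_pos (show ((⟨i, by omega⟩ : Fin a) : ℕ) < a - 1 by simp; omega)] at e2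
    exact e1.trans e2.symm
  -- multi-step diagonal constancy (shifting up-left by k)
  have shift : ∀ (k i j : ℕ) (hik : k ≤ i) (hjk : k ≤ j) (hi : i < a)
      (hj : j < d), φ₂ ⟨i, hi⟩ ⟨j, hj⟩ =
        φ₂ ⟨i - k, by omega⟩ ⟨j - k, by omega⟩ := by
    intro k
    induction k with
    | zero => intro i j _ _ hi hj; exact ecg (by omega) (by omega)
    | succ k ih =>
      intro i j hik hjk hi hj
      have h1 := ih i j (by omega) (by omega) hi hj
      have h2 := C1 (i - (k + 1)) (j - (k + 1))
        (show i - (k + 1) + 1 < a by omega) (show j - (k + 1) + 1 < d by omega)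
      calc φ₂ ⟨i, hi⟩ ⟨j, hj⟩
          = φ₂ ⟨i - k, by omega⟩ ⟨j - k, by omega⟩ := h1
        _ = φ₂ ⟨i - (k + 1) + 1, by omega⟩ ⟨j - (k + 1) + 1, by omega⟩ :=
            ecg (by omega) (by omega)
        _ = φ₂ ⟨i - (k + 1), by omega⟩ ⟨j - (k + 1), by omega⟩ := h2
  -- zero above the diagonal
  have Zgt : ∀ (i j : ℕ) (hi : i < a) (hj : j < d), i < j →
      φ₂ ⟨i, hi⟩ ⟨j, hj⟩ = 0 := by
    intro i j hi hj hij
    rw [shift i i j le_rfl (by omega) hi hj]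
    have e2 := rel_H2 ha hd φ₁ φ₂ h₂ ⟨0, by omega⟩ (j - i - 1) (by omega)
    rw [dif_neg (by simp)] at e2
    exact (ecg (by omega) (by omega)).trans e2
  -- zero when the diagonal runs off the bottom before the right edge
  have Zdown : ∀ (i j : ℕ) (hi : i < a) (hj : j < d), j ≤ i →
      j + (a - 1 - i) < d - 1 → φ₂ ⟨i, hi⟩ ⟨j, hj⟩ = 0 := by
    intro i j hi hj hji hcol
    have hs := shift (a - 1 - i) (a - 1) (j + (a - 1 - i)) (by omega)
      (by omega) (by omega) (by omega)
    rw [ecg (hi' := hi) (hj' := hj) (show a - 1 - (a - 1 - i) = i by omega)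
      (show j + (a - 1 - i) - (a - 1 - i) = j by omega)] at hs
    rw [← hs]
    have e1 := rel_H1 hd φ₁ φ₂ h₁ ⟨a - 1, by omega⟩ (j + (a - 1 - i)) hcol
    rw [dif_neg (by simp)] at e1
    exact e1
  -- φ₁ entries agree with φ₂ entries
  have F12 : ∀ (u : Fin (a - 1)) (v : Fin (d - 1)),
      φ₁ u v = φ₂ ⟨(u : ℕ), by omega⟩ ⟨(v : ℕ), by omega⟩ := by
    intro u v
    have e1 := rel_H1 hd φ₁ φ₂ h₁ ⟨(u : ℕ), by omega⟩ (v : ℕ) v.isLt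
    rw [dif_pos (show ((⟨(u : ℕ), by omega⟩ : Fin a) : ℕ) < a - 1 from u.isLt)]
      at e1
    exact e1.symm
  constructor
  · intro hda
    refine ⟨fun t => if h : t < a then φ₂ ⟨t, h⟩ ⟨0, by omega⟩ else 0, ?_, ?_⟩
    · intro u v
      beta_reduce
      by_cases hc : (v : ℕ) ≤ (u : ℕ) ∧ (u : ℕ) - (v : ℕ) ≤ a - d
      · rw [if_pos hc, dif_pos (show (u : ℕ) - (v : ℕ) < a by omega)]
        have hs := shift (v : ℕ) (u : ℕ) (v : ℕ) hc.1 le_rfl u.isLt v.isLt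
        exact hs.trans (ecg rfl (by omega))
      · rw [if_neg hc]
        rcases Nat.lt_or_ge (u : ℕ) (v : ℕ) with h | h
        · exact Zgt (u : ℕ) (v : ℕ) u.isLt v.isLt h
        · exact Zdown (u : ℕ) (v : ℕ) u.isLt v.isLt h (by
            have := u.isLt; have := v.isLt; omega)
    · intro u v
      beta_reduce
      rw [F12 u v]
      by_cases hc : (v : ℕ) ≤ (u : ℕ) ∧ (u : ℕ) - (v : ℕ) ≤ a - d
      · rw [if_pos hc, dif_pos (show (u : ℕ) - (v : ℕ) < a by
          have := u.isLt; omega)]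
        have hs := shift (v : ℕ) (u : ℕ) (v : ℕ) hc.1 le_rfl
          (by have := u.isLt; omega) (by have := v.isLt; omega)
        exact hs.trans (ecg rfl (by omega))
      · rw [if_neg hc]
        rcases Nat.lt_or_ge (u : ℕ) (v : ℕ) with h | h
        · exact Zgt (u : ℕ) (v : ℕ) _ _ h
        · exact Zdown (u : ℕ) (v : ℕ) _ _ h (by
            have := u.isLt; have := v.isLt; omega)
  · intro had
    have Z2 : ∀ (u : Fin a) (v : Fin d), φ₂ u v = 0 := by
      intro u v
      rcases Nat.lt_or_ge (u : ℕ) (v : ℕ) with h | h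
      · exact Zgt (u : ℕ) (v : ℕ) u.isLt v.isLt h
      · exact Zdown (u : ℕ) (v : ℕ) u.isLt v.isLt h (by
          have := u.isLt; have := v.isLt; omega)
    constructor
    · ext u v
      rw [F12 u v, Z2]
      rfl
    · ext u v
      rw [Z2]
      rfl
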